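/- Let $n$ be a positive integer and $T$ a sequence (finite multiset) over a cyclic group of order $n$. If the length of $T$ is at least $(n+1)/2$ and $T$ contains no nonempty subsequence whose product is the identity, then some element $g$ occurs in $T$ with multiplicity at least $2\ell(T) - n + 1$. -/

import Mathlib

set_option linter.unusedSectionVars false

/-- A sequence (multiset) over `G` has a product-one subsequence if some nonempty
list of its terms (a sub-multiset) multiplies to the identity. -/
def HasProdOneSubseq {G : Type*} [Group G] (S : Multiset G) : Prop :=
  ∃ l : List G, l ≠ [] ∧ (l : Multiset G) ≤ S ∧ l.prod = 1

namespace BENproof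

variable {G : Type*} [CommGroup G] [DecidableEq G]

/-- Zero-sum free (multiplicative): no nonempty sub-multiset has product one. -/
def ZSF (T : Multiset G) : Prop :=
  ∀ W : Multiset G, W ≤ T → W ≠ 0 → W.prod ≠ 1

/-- A "gadget": a block `p.1` together with a list of nonempty sub-multisets whose
products are pairwise distinct, unless the block contains a product-one sub-multiset. -/
def GoodG (p : Multiset G × List (Multiset G)) : Prop :=
  (∀ V ∈ p.2, V ≤ p.1 ∧ V ≠ 0) ∧
  p.2.Pairwise (fun V V' => V.prod = V'.prod →
    ∃ W : Multiset G, W ≤ p.1 ∧ W ≠ 0 ∧ W.prod = 1)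

lemma key (L : List (Multiset G × List (Multiset G)))
    (hg : ∀ p ∈ L, GoodG p) (hno : ZSF (L.map Prod.fst).sum) :
    ∃ X : List G, X.Nodup ∧
      (∀ x ∈ X, ∃ U : Multiset G, U ≤ (L.map Prod.fst).sum ∧ U ≠ 0 ∧ U.prod = x) ∧
      X.length = (L.map fun p => p.2.length).sum := by
  induction L with
  | nil => exact ⟨[], by simp, by simp, by simp⟩
  | cons p L ih =>
    obtain ⟨B, F⟩ := p
    simp only [List.map_cons, List.sum_cons] at hno ⊢
    have hT'le : (L.map Prod.fst).sum ≤ B + (L.map Prod.fst).sum :=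
      Multiset.le_add_left _ _
    have hno' : ZSF (L.map Prod.fst).sum := fun W hW => hno W (hW.trans hT'le)
    obtain ⟨X', hX'nd, hX'rep, hX'len⟩ :=
      ih (fun q hq => hg q (List.mem_cons_of_mem _ hq)) hno'
    obtain ⟨hsub, hpw⟩ := hg (B, F) List.mem_cons_self
    refine ⟨F.map Multiset.prod ++ X'.map (fun x => B.prod * x), ?_, ?_, ?_⟩
    · rw [List.nodup_append]
      refine ⟨?_, ?_, ?_⟩
      · rw [List.Nodup, List.pairwise_map]
        refine hpw.imp ?_
        intro V V' h hVp
        obtain ⟨W, hW1, hW2, hW3⟩ := h hVp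
        exact hno W (hW1.trans (Multiset.le_add_right _ _)) hW2 hW3
      · exact hX'nd.map (fun a b hab => mul_left_cancel hab)
      · intro x hx1 x₂ hx2 hxy
        subst hxy
        simp only [List.mem_map] at hx1 hx2
        obtain ⟨V, hVF, rfl⟩ := hx1
        obtain ⟨x', hx'X, hEq⟩ := hx2
        obtain ⟨U', hU'le, hU'ne, hU'prod⟩ := hX'rep x' hx'X
        have hVB : V ≤ B := (hsub V hVF).1
        have hprod : (B - V).prod * V.prod = B.prod := by
          rw [← Multiset.prod_add, tsub_add_cancel_of_le hVB]
        have h2 : ((B - V).prod * x') * V.prod = V.prod := by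
          rw [mul_right_comm, hprod, hEq]
        have h3 : (B - V).prod * x' = 1 := mul_eq_right.mp h2
        refine absurd ?_ (hno ((B - V) + U')
          (add_le_add tsub_le_self hU'le) ?_)
        · rw [Multiset.prod_add, hU'prod, h3]
        · intro hc
          exact hU'ne (Multiset.le_zero.1 (hc ▸ Multiset.le_add_left _ _))
    · intro x hx
      rcases List.mem_append.1 hx with hx | hx
      · simp only [List.mem_map] at hx
        obtain ⟨V, hVF, rfl⟩ := hx
        exact ⟨V, (hsub V hVF).1.trans (Multiset.le_add_right _ _), (hsub V hVF).2, rfl⟩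
      · simp only [List.mem_map] at hx
        obtain ⟨x', hx', rfl⟩ := hx
        obtain ⟨U', h1, h2, h3⟩ := hX'rep x' hx'
        refine ⟨B + U', add_le_add le_rfl h1, ?_, by rw [Multiset.prod_add, h3]⟩
        intro hc
        exact h2 (Multiset.le_zero.1 (hc ▸ Multiset.le_add_left _ _))
    · simp [hX'len]

lemma good_single (c : G) : GoodG ({c}, [({c} : Multiset G)]) := by
  constructor
  · intro V hV
    simp only [List.mem_singleton] at hV
    subst hV
    exact ⟨le_rfl, by simp⟩
  · exact List.pairwise_singleton _ _

lemma good_pair (c d : G) (hcd : c ≠ d) :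
    GoodG (c ::ₘ {d}, [{c}, c ::ₘ {d}, {d}]) := by
  constructor
  · intro V hV
    simp only [List.mem_cons, List.mem_singleton, List.not_mem_nil, or_false] at hV
    rcases hV with rfl | rfl | rfl
    · exact ⟨Multiset.singleton_le.2 (by simp), by simp⟩
    · exact ⟨le_rfl, by simp⟩
    · exact ⟨Multiset.singleton_le.2 (by simp), by simp⟩
  · refine List.Pairwise.cons ?_ (List.Pairwise.cons ?_ (List.pairwise_singleton _ _))
    · intro V' hV' h
      simp only [List.mem_cons, List.mem_singleton, List.not_mem_nil, or_false] at hV'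
      rcases hV' with rfl | rfl
      · simp only [Multiset.prod_singleton, Multiset.prod_cons] at h
        refine ⟨{d}, Multiset.singleton_le.2 (by simp), by simp, ?_⟩
        rw [Multiset.prod_singleton]
        exact left_eq_mul.mp h
      · simp only [Multiset.prod_singleton] at h
        exact absurd h hcd
    · intro V' hV' h
      simp only [List.mem_singleton] at hV'
      subst hV'
      simp only [Multiset.prod_singleton, Multiset.prod_cons] at h
      refine ⟨{c}, Multiset.singleton_le.2 (by simp), by simp, ?_⟩
      rw [Multiset.prod_singleton]
      exact mul_eq_right.mp h

lemma good_triple (c d e : G) (hcd : c ≠ d) (hce : c ≠ e) (hde : d ≠ e)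
    (hne1 : e ≠ c * d) (hne2 : d ≠ c * e) :
    GoodG (c ::ₘ d ::ₘ {e},
      [{c}, {d}, {e}, c ::ₘ {d}, c ::ₘ {e}, c ::ₘ d ::ₘ {e}]) := by
  have hBc : ({c} : Multiset G) ≤ c ::ₘ d ::ₘ {e} := Multiset.singleton_le.2 (by simp)
  have hBd : ({d} : Multiset G) ≤ c ::ₘ d ::ₘ {e} := Multiset.singleton_le.2 (by simp)
  have hBe : ({e} : Multiset G) ≤ c ::ₘ d ::ₘ {e} := Multiset.singleton_le.2 (by simp)
  have hBcd : (c ::ₘ {d} : Multiset G) ≤ c ::ₘ d ::ₘ {e} :=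
    Multiset.cons_le_cons c (Multiset.singleton_le.2 (by simp))
  have hBce : (c ::ₘ {e} : Multiset G) ≤ c ::ₘ d ::ₘ {e} :=
    Multiset.cons_le_cons c (Multiset.singleton_le.2 (by simp))
  have hBde : (d ::ₘ {e} : Multiset G) ≤ c ::ₘ d ::ₘ {e} := Multiset.le_cons_self _ _
  constructor
  · intro V hV
    simp only [List.mem_cons, List.mem_singleton, List.not_mem_nil, or_false] at hV
    rcases hV with rfl | rfl | rfl | rfl | rfl | rfl
    · exact ⟨hBc, by simp⟩
    · exact ⟨hBd, by simp⟩
    · exact ⟨hBe, by simp⟩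
    · exact ⟨hBcd, by simp⟩
    · exact ⟨hBce, by simp⟩
    · exact ⟨le_rfl, by simp⟩
  · refine List.Pairwise.cons ?_ (List.Pairwise.cons ?_ (List.Pairwise.cons ?_
      (List.Pairwise.cons ?_ (List.Pairwise.cons ?_ (List.pairwise_singleton _ _)))))
    · -- V = {c}
      intro V' hV'
      simp only [List.mem_cons, List.mem_singleton, List.not_mem_nil, or_false] at hV'
      rcases hV' with rfl | rfl | rfl | rfl | rfl <;>
        simp only [Multiset.prod_singleton, Multiset.prod_cons] <;> intro h
      · exact absurd h hcd
      · exact absurd h hce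
      · refine ⟨{d}, hBd, by simp, ?_⟩
        rw [Multiset.prod_singleton]
        exact left_eq_mul.mp h
      · refine ⟨{e}, hBe, by simp, ?_⟩
        rw [Multiset.prod_singleton]
        exact left_eq_mul.mp h
      · refine ⟨d ::ₘ {e}, hBde, by simp, ?_⟩
        rw [Multiset.prod_cons, Multiset.prod_singleton]
        exact left_eq_mul.mp h
    · -- V = {d}
      intro V' hV'
      simp only [List.mem_cons, List.mem_singleton, List.not_mem_nil, or_false] at hV'
      rcases hV' with rfl | rfl | rfl | rfl <;>
        simp only [Multiset.prod_singleton, Multiset.prod_cons] <;> intro h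
      · exact absurd h hde
      · refine ⟨{c}, hBc, by simp, ?_⟩
        rw [Multiset.prod_singleton]
        exact right_eq_mul.mp h
      · exact absurd h hne2
      · refine ⟨c ::ₘ {e}, hBce, by simp, ?_⟩
        rw [Multiset.prod_cons, Multiset.prod_singleton]
        rw [mul_left_comm] at h
        exact left_eq_mul.mp h
    · -- V = {e}
      intro V' hV'
      simp only [List.mem_cons, List.mem_singleton, List.not_mem_nil, or_false] at hV'
      rcases hV' with rfl | rfl | rfl <;>
        simp only [Multiset.prod_singleton, Multiset.prod_cons] <;> intro h
      · exact absurd h hne1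
      · refine ⟨{c}, hBc, by simp, ?_⟩
        rw [Multiset.prod_singleton]
        exact right_eq_mul.mp h
      · refine ⟨c ::ₘ {d}, hBcd, by simp, ?_⟩
        rw [Multiset.prod_cons, Multiset.prod_singleton]
        rw [← mul_assoc] at h
        exact right_eq_mul.mp h
    · -- V = c ::ₘ {d}
      intro V' hV'
      simp only [List.mem_cons, List.mem_singleton, List.not_mem_nil, or_false] at hV'
      rcases hV' with rfl | rfl <;>
        simp only [Multiset.prod_singleton, Multiset.prod_cons] <;> intro h
      · exact absurd (mul_left_cancel h) hde
      · refine ⟨{e}, hBe, by simp, ?_⟩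
        rw [Multiset.prod_singleton]
        exact left_eq_mul.mp (mul_left_cancel h)
    · -- V = c ::ₘ {e}
      intro V' hV'
      simp only [List.mem_singleton] at hV'
      subst hV'
      simp only [Multiset.prod_singleton, Multiset.prod_cons]
      intro h
      refine ⟨{d}, hBd, by simp, ?_⟩
      rw [Multiset.prod_singleton]
      exact right_eq_mul.mp (mul_left_cancel h)

lemma good_special (w u : G) (hw2 : w * w = 1) (hw1 : w ≠ 1) (hu1 : u ≠ 1)
    (huw : u ≠ w) (husq : u * u ≠ 1) :
    GoodG (w ::ₘ u ::ₘ {u * w},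
      [{w}, {u}, {u * w}, u ::ₘ {u * w}, w ::ₘ u ::ₘ {u * w}]) := by
  have hBw : ({w} : Multiset G) ≤ w ::ₘ u ::ₘ {u * w} := Multiset.singleton_le.2 (by simp)
  have hBu : ({u} : Multiset G) ≤ w ::ₘ u ::ₘ {u * w} := Multiset.singleton_le.2 (by simp)
  have hBuw : ({u * w} : Multiset G) ≤ w ::ₘ u ::ₘ {u * w} := Multiset.singleton_le.2 (by simp)
  have hBu_uw : (u ::ₘ {u * w} : Multiset G) ≤ w ::ₘ u ::ₘ {u * w} := Multiset.le_cons_self _ _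
  have hBwu : (w ::ₘ {u} : Multiset G) ≤ w ::ₘ u ::ₘ {u * w} :=
    Multiset.cons_le_cons w (Multiset.singleton_le.2 (by simp))
  constructor
  · intro V hV
    simp only [List.mem_cons, List.mem_singleton, List.not_mem_nil, or_false] at hV
    rcases hV with rfl | rfl | rfl | rfl | rfl
    · exact ⟨hBw, by simp⟩
    · exact ⟨hBu, by simp⟩
    · exact ⟨hBuw, by simp⟩
    · exact ⟨hBu_uw, by simp⟩
    · exact ⟨le_rfl, by simp⟩
  · refine List.Pairwise.cons ?_ (List.Pairwise.cons ?_ (List.Pairwise.cons ?_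
      (List.Pairwise.cons ?_ (List.pairwise_singleton _ _))))
    · -- V = {w}
      intro V' hV'
      simp only [List.mem_cons, List.mem_singleton, List.not_mem_nil, or_false] at hV'
      rcases hV' with rfl | rfl | rfl | rfl <;>
        simp only [Multiset.prod_singleton, Multiset.prod_cons] <;> intro h
      · exact absurd h.symm huw
      · exact absurd (right_eq_mul.mp h) hu1
      · rw [← mul_assoc] at h
        exact absurd (right_eq_mul.mp h) husq
      · refine ⟨u ::ₘ {u * w}, hBu_uw, by simp, ?_⟩
        rw [Multiset.prod_cons, Multiset.prod_singleton]
        exact left_eq_mul.mp h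
    · -- V = {u}
      intro V' hV'
      simp only [List.mem_cons, List.mem_singleton, List.not_mem_nil, or_false] at hV'
      rcases hV' with rfl | rfl | rfl <;>
        simp only [Multiset.prod_singleton, Multiset.prod_cons] <;> intro h
      · exact absurd (left_eq_mul.mp h) hw1
      · refine ⟨w ::ₘ {u}, hBwu, by simp, ?_⟩
        rw [Multiset.prod_cons, Multiset.prod_singleton, mul_comm]
        exact left_eq_mul.mp h
      · rw [mul_left_comm w u _, mul_left_comm w u w, hw2, mul_one] at h
        exact absurd (left_eq_mul.mp h) hu1
    · -- V = {u * w}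
      intro V' hV'
      simp only [List.mem_cons, List.mem_singleton, List.not_mem_nil, or_false] at hV'
      rcases hV' with rfl | rfl <;>
        simp only [Multiset.prod_singleton, Multiset.prod_cons] <;> intro h
      · exact absurd (right_eq_mul.mp h) hu1
      · rw [mul_left_comm w u _, mul_left_comm w u w, hw2, mul_one] at h
        exact absurd (mul_left_cancel h).symm huw
    · -- V = u ::ₘ {u * w}
      intro V' hV'
      simp only [List.mem_singleton] at hV'
      subst hV'
      simp only [Multiset.prod_singleton, Multiset.prod_cons]
      intro h
      exact absurd (right_eq_mul.mp h) hw1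

/-- The family of a triple gadget. -/
def tripleFam (c d e : G) : List (Multiset G) :=
  [{c}, {d}, {e}, c ::ₘ {d}, c ::ₘ {e}, c ::ₘ d ::ₘ {e}]

lemma layerAux (N : ℕ) : ∀ (S : Multiset G), Multiset.card S ≤ N → S.Nodup →
    (1 : G) ∉ S →
    (∀ x y : G, x * x = 1 → y * y = 1 → x ≠ 1 → y ≠ 1 → x = y) →
    ∃ L : List (Multiset G × List (Multiset G)),
      (∀ p ∈ L, GoodG p) ∧ (L.map Prod.fst).sum = S ∧
      2 * Multiset.card S ≤ (L.map fun p => p.2.length).sum + 1 := by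
  induction N with
  | zero =>
    intro S hS _ _ _
    have : S = 0 := Multiset.card_eq_zero.1 (Nat.le_zero.1 hS)
    exact ⟨[], by simp, by simp [this], by simp [this]⟩
  | succ N ih =>
    intro S hScard hSnd h1S h2
    by_cases hS0 : S = 0
    · exact ⟨[], by simp, by simp [hS0], by simp [hS0]⟩
    obtain ⟨x, hxS⟩ := Multiset.exists_mem_of_ne_zero hS0
    have hd1 : x ::ₘ S.erase x = S := Multiset.cons_erase hxS
    by_cases hE1 : S.erase x = 0
    · -- singleton layer
      refine ⟨[({x}, [({x} : Multiset G)])], ?_, ?_, ?_⟩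
      · intro p hp
        simp only [List.mem_singleton] at hp
        subst hp
        exact good_single x
      · have : S = {x} := by rw [← hd1, hE1]; rfl
        simp [this]
      · have : Multiset.card S = 1 := by rw [← hd1, hE1]; simp
        rw [this]
        simp
    obtain ⟨y, hyE1⟩ := Multiset.exists_mem_of_ne_zero hE1
    have hd2 : y ::ₘ (S.erase x).erase y = S.erase x := Multiset.cons_erase hyE1
    have hxy : x ≠ y := by
      intro h
      have hnd := hSnd
      rw [← hd1, Multiset.nodup_cons] at hnd
      exact hnd.1 (h ▸ hyE1)
    by_cases hE2 : (S.erase x).erase y = 0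
    · -- pair layer
      refine ⟨[(x ::ₘ {y}, [{x}, x ::ₘ {y}, {y}])], ?_, ?_, ?_⟩
      · intro p hp
        simp only [List.mem_singleton] at hp
        subst hp
        exact good_pair x y hxy
      · have : S = x ::ₘ {y} := by rw [← hd1, ← hd2, hE2]; simp
        simp [this]
      · have : Multiset.card S = 2 := by rw [← hd1, ← hd2, hE2]; simp
        rw [this]
        simp
    -- now |S| ≥ 3
    have hcard3 : 3 ≤ Multiset.card S := by
      have e1 : Multiset.card S = Multiset.card ((S.erase x).erase y) + 2 := by
        rw [← hd1, ← hd2]; simp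
      have e2 : 0 < Multiset.card ((S.erase x).erase y) := Multiset.card_pos.2 hE2
      omega
    by_cases hinv : ∃ w ∈ S, w * w = 1
    · -- case A: there is an involution w (necessarily unique)
      obtain ⟨w, hwS, hw2⟩ := hinv
      have hw1 : w ≠ 1 := fun h => h1S (h ▸ hwS)
      have hdw : w ::ₘ S.erase w = S := Multiset.cons_erase hwS
      have hwnd : w ∉ S.erase w := by
        have hnd := hSnd
        rw [← hdw, Multiset.nodup_cons] at hnd
        exact hnd.1
      have hS'nd : (S.erase w).Nodup := hSnd.erase w
      have h1S' : (1 : G) ∉ S.erase w := fun h => h1S (Multiset.mem_of_mem_erase h)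
      have hS'ninv : ∀ z ∈ S.erase w, z * z ≠ 1 := by
        intro z hz hz2
        have hz1 : z ≠ 1 := fun h => h1S' (h ▸ hz)
        exact hwnd ((h2 z w hz2 hw2 hz1 hw1) ▸ hz)
      have hcS' : 2 ≤ Multiset.card (S.erase w) := by
        have e3 : Multiset.card (S.erase w) + 1 = Multiset.card S := by
          rw [← hdw]; simp
        omega
      have hS'ne : S.erase w ≠ 0 := by
        intro h
        rw [h] at hcS'
        simp at hcS'
      by_cases hP : ∃ p ∈ S.erase w, ∃ q ∈ S.erase w, p ≠ q ∧ q ≠ p * w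
      · -- case A1 : usable triple (w, p, q)
        obtain ⟨p, hpS', q, hqS', hpq, hqpw⟩ := hP
        have hqS'p : q ∈ (S.erase w).erase p :=
          (Multiset.mem_erase_of_ne (fun h => hpq h.symm)).2 hqS'
        have hdp : p ::ₘ (S.erase w).erase p = S.erase w := Multiset.cons_erase hpS'
        have hdq : q ::ₘ ((S.erase w).erase p).erase q = (S.erase w).erase p :=
          Multiset.cons_erase hqS'p
        set S3 := ((S.erase w).erase p).erase q with hS3def
        have hSfull : w ::ₘ p ::ₘ q ::ₘ S3 = S := by
          rw [hS3def, hdq, hdp, hdw]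
        have hwp : w ≠ p := fun h => hwnd (h ▸ hpS')
        have hwq : w ≠ q := fun h => hwnd (h ▸ hqS')
        have hne1 : q ≠ w * p := by rw [mul_comm]; exact hqpw
        have hne2 : p ≠ w * q := by
          intro h
          apply hqpw
          rw [h, mul_comm w q, mul_assoc, hw2, mul_one]
        have hS3nd : S3.Nodup := (hS'nd.erase p).erase q
        have h1S3 : (1 : G) ∉ S3 := fun h =>
          h1S' (Multiset.mem_of_mem_erase (Multiset.mem_of_mem_erase h))
        have hS3card : Multiset.card S3 + 3 = Multiset.card S := by
          rw [← hSfull]; simp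
        obtain ⟨L3, hL3g, hL3sum, hL3cnt⟩ := ih S3 (by omega) hS3nd h1S3 h2
        refine ⟨(w ::ₘ p ::ₘ {q}, tripleFam w p q) :: L3, ?_, ?_, ?_⟩
        · intro r hr
          rcases List.mem_cons.1 hr with rfl | hr
          · exact good_triple w p q hwp hwq hpq hne1 hne2
          · exact hL3g r hr
        · simp only [List.map_cons, List.sum_cons, hL3sum]
          rw [← hSfull]
          simp [Multiset.cons_add, Multiset.singleton_add]
        · simp only [List.map_cons, List.sum_cons, tripleFam, List.length_cons,
            List.length_nil]
          omega
      · -- case A2 : S = {w, a, a*w}; special gadget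
        push_neg at hP
        obtain ⟨a, haS'⟩ := Multiset.exists_mem_of_ne_zero hS'ne
        have ha1 : a ≠ 1 := fun h => h1S' (h ▸ haS')
        have haw : a ≠ w := fun h => hwnd (h ▸ haS')
        have hasq : a * a ≠ 1 := hS'ninv a haS'
        have hda : a ::ₘ (S.erase w).erase a = S.erase w := Multiset.cons_erase haS'
        have hbne : (S.erase w).erase a ≠ 0 := by
          intro h
          have : Multiset.card (S.erase w) = 1 := by rw [← hda, h]; simp
          omega
        obtain ⟨b, hb⟩ := Multiset.exists_mem_of_ne_zero hbne
        have hbS' : b ∈ S.erase w := Multiset.mem_of_mem_erase hb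
        have hab : a ≠ b := fun h => hS'nd.notMem_erase (h ▸ hb)
        have hbaw : b = a * w := hP a haS' b hbS' hab
        have hdb : b ::ₘ ((S.erase w).erase a).erase b = (S.erase w).erase a :=
          Multiset.cons_erase hb
        have hzero : ((S.erase w).erase a).erase b = 0 := by
          by_contra hz
          obtain ⟨t, ht⟩ := Multiset.exists_mem_of_ne_zero hz
          have htb : t ∈ (S.erase w).erase a := Multiset.mem_of_mem_erase ht
          have htS' : t ∈ S.erase w := Multiset.mem_of_mem_erase htb
          have hta : t ≠ a := fun h => hS'nd.notMem_erase (h ▸ htb)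
          have htbne : t ≠ b := fun h => (hS'nd.erase a).notMem_erase (h ▸ ht)
          have hteq : t = a * w := hP a haS' t htS' (Ne.symm hta)
          exact htbne (hteq.trans hbaw.symm)
        have hfull : w ::ₘ a ::ₘ {a * w} = S := by
          rw [← hbaw, ← Multiset.cons_zero b, ← hzero, hdb, hda, hdw]
        refine ⟨[(w ::ₘ a ::ₘ {a * w},
            [{w}, {a}, {a * w}, a ::ₘ {a * w}, w ::ₘ a ::ₘ {a * w}])], ?_, ?_, ?_⟩
        · intro r hr
          simp only [List.mem_singleton] at hr
          subst hr
          exact good_special w a hw2 hw1 ha1 haw hasq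
        · simp [hfull]
        · have : Multiset.card S = 3 := by rw [← hfull]; simp
          rw [this]
          simp
    · -- case B : no involution in S
      obtain ⟨z, hzE2⟩ := Multiset.exists_mem_of_ne_zero hE2
      have hd3 : z ::ₘ ((S.erase x).erase y).erase z = (S.erase x).erase y :=
        Multiset.cons_erase hzE2
      set E3 := ((S.erase x).erase y).erase z with hE3def
      have hSfull : x ::ₘ y ::ₘ z ::ₘ E3 = S := by
        rw [hE3def, hd3, hd2, hd1]
      have hninv : ∀ t ∈ S, t * t ≠ 1 := fun t ht h => hinv ⟨t, ht, h⟩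
      have hyS : y ∈ S := Multiset.mem_of_mem_erase hyE1
      have hzS : z ∈ S := Multiset.mem_of_mem_erase (Multiset.mem_of_mem_erase hzE2)
      have hxz : x ≠ z := by
        intro h
        subst h
        exact hSnd.notMem_erase (Multiset.mem_of_mem_erase hzE2)
      have hyz : y ≠ z := by
        intro h
        have hnd := hSnd.erase x
        rw [← hd2, Multiset.nodup_cons] at hnd
        exact hnd.1 (h ▸ hzE2)
      obtain ⟨c, d, e, hcd, hce, hde, hne1, hne2, hperm⟩ :
          ∃ c d e : G, c ≠ d ∧ c ≠ e ∧ d ≠ e ∧ e ≠ c * d ∧ d ≠ c * e ∧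
            (c ::ₘ d ::ₘ e ::ₘ E3 : Multiset G) = x ::ₘ y ::ₘ z ::ₘ E3 := by
        by_cases hR1 : x = y * z
        · refine ⟨x, y, z, hxy, hxz, hyz, ?_, ?_, rfl⟩
          · intro h
            have hR1' := hR1
            rw [h, mul_left_comm] at hR1'
            exact hninv y hyS (left_eq_mul.mp hR1')
          · intro h
            have hR1' := hR1
            rw [h, mul_assoc] at hR1'
            exact hninv z hzS (left_eq_mul.mp hR1')
        by_cases hR2 : y = x * z
        · refine ⟨y, x, z, Ne.symm hxy, hyz, hxz, ?_, ?_, Multiset.cons_swap y x _⟩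
          · intro h
            have hR2' := hR2
            rw [h, mul_left_comm] at hR2'
            exact hninv x hxS (left_eq_mul.mp hR2')
          · exact fun h => hR1 h
        by_cases hR3 : z = x * y
        · refine ⟨z, x, y, Ne.symm hxz, Ne.symm hyz, hxy, ?_, ?_, ?_⟩
          · exact fun h => hR2 (by rw [h, mul_comm])
          · exact fun h => hR1 (by rw [h, mul_comm])
          · rw [Multiset.cons_swap z x, Multiset.cons_swap z y]
        · exact ⟨x, y, z, hxy, hxz, hyz, fun h => hR3 h, fun h => hR2 h, rfl⟩
      have hSfull' : c ::ₘ d ::ₘ e ::ₘ E3 = S := by rw [hperm, hSfull]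
      have hE3nd : E3.Nodup := ((hSnd.erase x).erase y).erase z
      have h1E3 : (1 : G) ∉ E3 := fun h =>
        h1S (Multiset.mem_of_mem_erase (Multiset.mem_of_mem_erase
          (Multiset.mem_of_mem_erase h)))
      have hE3card : Multiset.card E3 + 3 = Multiset.card S := by
        rw [← hSfull]; simp
      obtain ⟨L3, hL3g, hL3sum, hL3cnt⟩ := ih E3 (by omega) hE3nd h1E3 h2
      refine ⟨(c ::ₘ d ::ₘ {e}, tripleFam c d e) :: L3, ?_, ?_, ?_⟩
      · intro r hr
        rcases List.mem_cons.1 hr with rfl | hr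
        · exact good_triple c d e hcd hce hde hne1 hne2
        · exact hL3g r hr
      · simp only [List.map_cons, List.sum_cons, hL3sum]
        rw [← hSfull']
        simp [Multiset.cons_add, Multiset.singleton_add]
      · simp only [List.map_cons, List.sum_cons, tripleFam, List.length_cons,
          List.length_nil]
        omega

lemma build (N : ℕ) : ∀ (T : Multiset G), Multiset.card T ≤ N → (1 : G) ∉ T →
    (∀ x y : G, x * x = 1 → y * y = 1 → x ≠ 1 → y ≠ 1 → x = y) →
    ∃ L : List (Multiset G × List (Multiset G)),
      (∀ p ∈ L, GoodG p) ∧ (L.map Prod.fst).sum = T ∧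
      2 * Multiset.card T ≤ (L.map fun p => p.2.length).sum
        + T.toFinset.sup (fun g => T.count g) := by
  induction N with
  | zero =>
    intro T hT _ _
    have : T = 0 := Multiset.card_eq_zero.1 (Nat.le_zero.1 hT)
    exact ⟨[], by simp, by simp [this], by simp [this]⟩
  | succ N ih =>
    intro T hTcard h1T h2
    by_cases hT0 : T = 0
    · exact ⟨[], by simp, by simp [hT0], by simp [hT0]⟩
    have hDle : T.dedup ≤ T := Multiset.dedup_le T
    have hDnd : T.dedup.Nodup := Multiset.nodup_dedup T
    have h1D : (1 : G) ∉ T.dedup := fun h => h1T (Multiset.mem_dedup.1 h)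
    obtain ⟨L1, hL1g, hL1sum, hL1cnt⟩ :=
      layerAux (Multiset.card T.dedup) T.dedup le_rfl hDnd h1D h2
    have hsplit : T.dedup + (T - T.dedup) = T := add_tsub_cancel_of_le hDle
    have hcards : Multiset.card T.dedup + Multiset.card (T - T.dedup) = Multiset.card T := by
      rw [← Multiset.card_add, hsplit]
    have hDpos : 0 < Multiset.card T.dedup := by
      obtain ⟨t, ht⟩ := Multiset.exists_mem_of_ne_zero hT0
      exact Multiset.card_pos_iff_exists_mem.2 ⟨t, Multiset.mem_dedup.2 ht⟩
    have h1T' : (1 : G) ∉ T - T.dedup := fun h =>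
      h1T (Multiset.mem_of_le tsub_le_self h)
    obtain ⟨L2, hL2g, hL2sum, hL2cnt⟩ := ih (T - T.dedup) (by omega) h1T' h2
    have hMT1 : 1 ≤ T.toFinset.sup (fun g => T.count g) := by
      obtain ⟨t, ht⟩ := Multiset.exists_mem_of_ne_zero hT0
      have ha : 1 ≤ T.count t := Multiset.one_le_count_iff_mem.2 ht
      have hb : T.count t ≤ T.toFinset.sup (fun g => T.count g) :=
        Finset.le_sup (f := fun g => T.count g) (Multiset.mem_toFinset.2 ht)
      omega
    have hM' : (T - T.dedup).toFinset.sup (fun g => (T - T.dedup).count g) + 1 ≤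
        T.toFinset.sup (fun g => T.count g) := by
      have hle : (T - T.dedup).toFinset.sup (fun g => (T - T.dedup).count g) ≤
          T.toFinset.sup (fun g => T.count g) - 1 := by
        apply Finset.sup_le
        intro g hg
        have hgT' : g ∈ T - T.dedup := Multiset.mem_toFinset.1 hg
        have hgT : g ∈ T := Multiset.mem_of_le tsub_le_self hgT'
        have hcnt : (T - T.dedup).count g = T.count g - 1 := by
          rw [Multiset.count_sub, Multiset.count_dedup]
          simp [hgT]
        have hcl : T.count g ≤ T.toFinset.sup (fun g => T.count g) :=
          Finset.le_sup (f := fun g => T.count g) (Multiset.mem_toFinset.2 hgT)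
        omega
      omega
    refine ⟨L1 ++ L2, ?_, ?_, ?_⟩
    · intro p hp
      rcases List.mem_append.1 hp with h | h
      exacts [hL1g p h, hL2g p h]
    · rw [List.map_append, List.sum_append, hL1sum, hL2sum, hsplit]
    · rw [List.map_append, List.sum_append]
      omega

end BENproof

theorem stmt_0 {G : Type*} [Group G] [IsCyclic G] [Fintype G] [DecidableEq G]
    (n : ℕ) (hn : 0 < n) (hcard : Fintype.card G = n)
    (T : Multiset G) (hlen : n + 1 ≤ 2 * Multiset.card T)
    (hno : ¬ HasProdOneSubseq T) :
    ∃ g : G, 2 * Multiset.card T - n + 1 ≤ T.count g := by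
  letI : CommGroup G := IsCyclic.commGroup
  have hno' : BENproof.ZSF T := by
    intro W hWle hWne hWp
    refine hno ⟨W.toList, ?_, ?_, ?_⟩
    · simpa [Multiset.toList_eq_nil] using hWne
    · rw [Multiset.coe_toList]; exact hWle
    · rw [Multiset.prod_toList]; exact hWp
  have h2 : ∀ x y : G, x * x = 1 → y * y = 1 → x ≠ 1 → y ≠ 1 → x = y := by
    intro x y hx hy hx1 hy1
    by_contra hxy
    have hle := IsCyclic.card_pow_eq_one_le (α := G) (n := 2) (by norm_num)
    have hsub : ({1, x, y} : Finset G) ⊆ ({a : G | a ^ 2 = 1} : Finset G) := by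
      intro a ha
      have hmem : a = 1 ∨ a = x ∨ a = y := by simpa using ha
      have ha2 : a ^ 2 = 1 := by
        rcases hmem with rfl | rfl | rfl
        · simp
        · rw [pow_two]; exact hx
        · rw [pow_two]; exact hy
      simp [Finset.mem_filter, ha2]
    have h3 : ({1, x, y} : Finset G).card = 3 := by
      rw [Finset.card_insert_of_notMem (by simp [Ne.symm hx1, Ne.symm hy1]),
        Finset.card_insert_of_notMem (by simp [hxy]), Finset.card_singleton]
    have h4 := (Finset.card_le_card hsub).trans hle
    omega
  have h1T : (1 : G) ∉ T := fun h =>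
    hno' {1} (Multiset.singleton_le.2 h) (by simp) (by simp)
  obtain ⟨Lb, hLbg, hLbsum, hLbcnt⟩ := BENproof.build (Multiset.card T) T le_rfl h1T h2
  obtain ⟨X, hXnd, hXrep, hXlen⟩ := BENproof.key Lb hLbg (by rw [hLbsum]; exact hno')
  have hXsub : X.toFinset ⊆ Finset.univ.erase 1 := by
    intro a ha
    rw [List.mem_toFinset] at ha
    obtain ⟨U, hU1, hU2, hU3⟩ := hXrep a ha
    rw [hLbsum] at hU1
    exact Finset.mem_erase.2 ⟨fun h => hno' U hU1 hU2 (h ▸ hU3), Finset.mem_univ _⟩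
  have hXlen' : X.length ≤ n - 1 := by
    have h4 := Finset.card_le_card hXsub
    rw [Finset.card_erase_of_mem (Finset.mem_univ _), Finset.card_univ, hcard,
      List.toFinset_card_of_nodup hXnd] at h4
    exact h4
  have hT0 : T ≠ 0 := by
    intro h
    rw [h] at hlen
    simp only [Multiset.card_zero, mul_zero] at hlen
    omega
  have hTne : T.toFinset.Nonempty := by
    obtain ⟨t, ht⟩ := Multiset.exists_mem_of_ne_zero hT0
    exact ⟨t, Multiset.mem_toFinset.2 ht⟩
  obtain ⟨g, hgmem, hgsup⟩ := Finset.exists_mem_eq_sup T.toFinset hTne (fun g => T.count g)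
  refine ⟨g, ?_⟩
  rw [hgsup, ← hXlen] at hLbcnt
  omega
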